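/- For α : Fin n → ℝ with unique strict maximizer m*, and h the temperature-t softmax, for every q ≠ m* the product α q · h(q; t) · (1/t) tends to 0 as t → 0⁺ (i.e., even divided by t, non-maximal softmax weights vanish). -/

import Mathlib

open Real Filter

theorem softmax_offmax_over_t_tendsto_zero (n : ℕ) (hn : 0 < n) (α : Fin n → ℝ)
    (mstar : Fin n) (hmax : ∀ p : Fin n, p ≠ mstar → α p < α mstar)
    (q : Fin n) (hq : q ≠ mstar) :
    Tendsto
      (fun t : ℝ =>
        α q * (Real.exp (α q / t) / ∑ p : Fin n, Real.exp (α p / t)) * (1 / t))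
      (nhdsWithin 0 (Set.Ioi 0)) (nhds 0) := by
  set c : ℝ := α mstar - α q with hc_def
  have hc : 0 < c := sub_pos.mpr (hmax q hq)
  -- auxiliary limit : exp(-(c/t)) * (1/t) → 0
  have h1 : Tendsto (fun t : ℝ => 1 / t) (nhdsWithin 0 (Set.Ioi 0)) atTop := by
    simpa [one_div] using tendsto_inv_nhdsGT_zero
  have h2 : Tendsto (fun u : ℝ => (c * u) * Real.exp (-(c * u))) atTop (nhds 0) := by
    have := tendsto_pow_mul_exp_neg_atTop_nhds_zero 1
    have hcomp : Tendsto (fun u : ℝ => c * u) atTop atTop :=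
      Tendsto.const_mul_atTop hc tendsto_id
    simpa [Function.comp_def] using this.comp hcomp
  have h3 : Tendsto (fun t : ℝ => Real.exp (-(c / t)) * (1 / t))
      (nhdsWithin 0 (Set.Ioi 0)) (nhds 0) := by
    have h4 : Tendsto (fun u : ℝ => u * Real.exp (-(c * u))) atTop (nhds 0) := by
      have := h2.const_mul (1 / c)
      simpa [mul_comm, mul_assoc, mul_left_comm, one_div,
        inv_mul_cancel_left₀ hc.ne'] using this
    have := h4.comp h1
    refine this.congr (fun t => ?_)
    simp only [Function.comp]
    rw [mul_one_div, mul_comm, mul_one_div]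
  have hbound : ∀ᶠ t in nhdsWithin 0 (Set.Ioi 0),
      ‖α q * (Real.exp (α q / t) / ∑ p : Fin n, Real.exp (α p / t)) * (1 / t)‖
        ≤ |α q| * (Real.exp (-(c / t)) * (1 / t)) := by
    filter_upwards [self_mem_nhdsWithin] with t ht
    have ht' : (0:ℝ) < t := ht
    have hS : Real.exp (α mstar / t) ≤ ∑ p : Fin n, Real.exp (α p / t) :=
      Finset.single_le_sum (f := fun p => Real.exp (α p / t)) (fun p _ => (Real.exp_pos _).le) (Finset.mem_univ mstar)
    have hSpos : (0:ℝ) < ∑ p : Fin n, Real.exp (α p / t) :=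
      lt_of_lt_of_le (Real.exp_pos _) hS
    have hfrac : Real.exp (α q / t) / (∑ p : Fin n, Real.exp (α p / t))
        ≤ Real.exp (-(c / t)) := by
      rw [div_le_iff₀ hSpos]
      calc Real.exp (α q / t) = Real.exp (-(c / t)) * Real.exp (α mstar / t) := by
            rw [← Real.exp_add]; congr 1; field_simp; ring
        _ ≤ Real.exp (-(c / t)) * ∑ p : Fin n, Real.exp (α p / t) := by
            exact mul_le_mul_of_nonneg_left hS (Real.exp_pos _).le
    have hfrac0 : 0 ≤ Real.exp (α q / t) / (∑ p : Fin n, Real.exp (α p / t)) :=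
      div_nonneg (Real.exp_pos _).le hSpos.le
    rw [Real.norm_eq_abs, abs_mul, abs_mul, abs_of_nonneg hfrac0,
      abs_of_pos (by positivity : (0:ℝ) < 1 / t), mul_assoc]
    exact mul_le_mul_of_nonneg_left
      (mul_le_mul_of_nonneg_right hfrac (by positivity)) (abs_nonneg _)
  have := (h3.const_mul |α q|)
  rw [mul_zero] at this
  exact squeeze_zero_norm' hbound this
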